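/- For N ≥ 2, β ∈ (0, π), and c ∈ (0, 1], the measure of Ω_β \ 𝑇̃Ω_β(cε) equals c^N times the measure of Ω_β \ 𝑇̃Ω_β(ε), for all small ε > 0. -/

import Mathlib

open Real MeasureTheory Pointwise

set_option maxHeartbeats 1600000 in
/-- scaling property of the measure of `Ω_β \ 𝑇̃Ω_β(cε)`:
for `c ∈ (0,1]` and all small `ε > 0`,
`|Ω_β \ 𝑇̃Ω_β(cε)| = c^N |Ω_β \ 𝑇̃Ω_β(ε)|`, where `𝑇̃Ω_β(ε)` is the open set
bounded below by the Lipschitz profile `g_ε` and `Ω_β = 𝑇̃Ω_β(0)`. -/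
theorem measure_scaling (N : ℕ) (hN : 2 ≤ N) (β : ℝ) (hβ : β ∈ Set.Ioo 0 π)
    (c : ℝ) (hc : c ∈ Set.Ioc (0 : ℝ) 1)
    (g : ℝ → ℝ → ℝ)
    (hg : ∀ ε b : ℝ, g ε b =
      if b ≤ ε * Real.sin β then ε - b * Real.tan (β / 2)
      else b * (Real.cos β / Real.sin β))
    (T : ℝ → Set (EuclideanSpace ℝ (Fin N)))
    (hT : ∀ ε, T ε = {x | g ε (Real.sqrt (‖x‖ ^ 2 - (x ⟨0, by omega⟩) ^ 2)) < x ⟨0, by omega⟩ ∧ ‖x‖ < 1}) :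
    ∃ ε₀ > 0, ∀ ε : ℝ, 0 < ε → ε < ε₀ →
      volume (T 0 \ T (c * ε)) = ENNReal.ofReal (c ^ N) * volume (T 0 \ T ε) := by
  obtain ⟨hβ0, hβπ⟩ := hβ
  obtain ⟨hc0, hc1⟩ := hc
  have hsin : 0 < Real.sin β := Real.sin_pos_of_pos_of_lt_pi hβ0 hβπ
  have htan : 0 ≤ Real.tan (β / 2) :=
    le_of_lt (Real.tan_pos_of_pos_of_lt_pi_div_two (by linarith) (by linarith))
  set i0 : Fin N := ⟨0, by omega⟩ with hi0
  set bb : EuclideanSpace ℝ (Fin N) → ℝ :=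
    fun x => Real.sqrt (‖x‖ ^ 2 - (x i0) ^ 2) with hbb
  -- basic facts
  have hsq : ∀ x : EuclideanSpace ℝ (Fin N), (x i0) ^ 2 ≤ ‖x‖ ^ 2 := by
    intro x
    have h1 : ‖x‖ = Real.sqrt (∑ i, ‖x i‖ ^ 2) := EuclideanSpace.norm_eq x
    have h2 : ‖x‖ ^ 2 = ∑ i, ‖x i‖ ^ 2 := by
      rw [h1, Real.sq_sqrt (Finset.sum_nonneg fun i _ => sq_nonneg _)]
    rw [h2]
    have := Finset.single_le_sum (f := fun i => ‖x i‖ ^ 2)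
      (fun i _ => sq_nonneg _) (Finset.mem_univ i0)
    calc (x i0) ^ 2 = ‖x i0‖ ^ 2 := by rw [Real.norm_eq_abs, sq_abs]
      _ ≤ _ := this
  have hbbsq : ∀ x : EuclideanSpace ℝ (Fin N), bb x ^ 2 = ‖x‖ ^ 2 - (x i0) ^ 2 := by
    intro x
    exact Real.sq_sqrt (by linarith [hsq x])
  have hbbnn : ∀ x : EuclideanSpace ℝ (Fin N), 0 ≤ bb x := fun x => Real.sqrt_nonneg _
  -- homogeneity of g
  have hgscale : ∀ r ε b : ℝ, 0 < r → g (r * ε) (r * b) = r * g ε b := by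
    intro r ε b hr
    rw [hg, hg]
    have hiff : r * b ≤ r * ε * Real.sin β ↔ b ≤ ε * Real.sin β := by
      rw [mul_assoc]
      exact mul_le_mul_iff_right₀ hr
    by_cases h : b ≤ ε * Real.sin β
    · rw [if_pos (hiff.mpr h), if_pos h]; ring
    · rw [if_neg (fun hh => h (hiff.mp hh)), if_neg h]; ring
  -- smul acts on bb and coordinates
  have hsmul_apply : ∀ (r : ℝ) (x : EuclideanSpace ℝ (Fin N)), (r • x) i0 = r * x i0 :=
    fun r x => rfl
  have hbbsmul : ∀ (r : ℝ), 0 ≤ r → ∀ x : EuclideanSpace ℝ (Fin N), bb (r • x) = r * bb x := by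
    intro r hr x
    have h1 : ‖r • x‖ = |r| * ‖x‖ := by rw [norm_smul, Real.norm_eq_abs]
    have h2 : ‖r • x‖ ^ 2 - ((r • x) i0) ^ 2 = r ^ 2 * (‖x‖ ^ 2 - (x i0) ^ 2) := by
      rw [h1, hsmul_apply]
      have : |r| ^ 2 = r ^ 2 := sq_abs r
      nlinarith [sq_abs r]
    rw [hbb]
    simp only
    rw [h2, Real.sqrt_mul (sq_nonneg r), Real.sqrt_sq hr]
  -- bound : points of T 0 \ T δ have small norm
  have hbound : ∀ δ : ℝ, 0 < δ → ∀ x ∈ T 0 \ T δ, ‖x‖ ^ 2 ≤ 2 * δ ^ 2 := by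
    intro δ hδ x hx
    rw [hT 0, hT δ] at hx
    obtain ⟨⟨hx1, hx2⟩, hx3⟩ := hx
    simp only [Set.mem_setOf_eq, not_and, not_lt] at hx3
    have hx3' : x i0 ≤ g δ (bb x) := by
      by_contra h
      exact absurd hx2 (not_lt.mpr (hx3 (lt_of_not_ge h)))
    have hx1' : g 0 (bb x) < x i0 := hx1
    have hble : bb x ≤ δ * Real.sin β := by
      by_contra h
      push_neg at h
      have hb0 : ¬ bb x ≤ 0 * Real.sin β := by
        rw [zero_mul]; push_neg
        exact lt_trans (by positivity) h
      have hg0 : g 0 (bb x) = bb x * (Real.cos β / Real.sin β) := by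
        rw [hg, if_neg hb0]
      have hgδ : g δ (bb x) = bb x * (Real.cos β / Real.sin β) := by
        rw [hg, if_neg (not_le.mpr h)]
      rw [hg0] at hx1'
      rw [hgδ] at hx3'
      linarith
    -- upper bound on x i0
    have hup : x i0 ≤ δ := by
      have : g δ (bb x) = δ - bb x * Real.tan (β / 2) := by rw [hg, if_pos hble]
      rw [this] at hx3'
      nlinarith [hbbnn x]
    -- lower bound on x i0
    have hlow : -δ ≤ x i0 := by
      have hglow : -δ ≤ g 0 (bb x) := by
        rw [hg]
        by_cases h : bb x ≤ 0 * Real.sin β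
        · rw [if_pos h]
          have : bb x = 0 := le_antisymm (by simpa using h) (hbbnn x)
          rw [this]
          simp
          linarith
        · rw [if_neg h]
          have hbpos : 0 < bb x := by
            push_neg at h; simpa using h
          have hcos : -1 ≤ Real.cos β := Real.neg_one_le_cos β
          rw [mul_div_assoc', le_div_iff₀ hsin]
          nlinarith [mul_nonneg (by linarith : (0:ℝ) ≤ Real.cos β + 1) hbpos.le]
      linarith
    have hb2 : bb x ^ 2 ≤ δ ^ 2 := by
      have h1 : bb x ≤ δ := le_trans hble (by nlinarith [Real.sin_le_one β])
      nlinarith [hbbnn x]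
    have := hbbsq x
    nlinarith
  -- the scaling identity of sets
  refine ⟨1 / 2, by norm_num, fun ε hε hε2 => ?_⟩
  have hkey : T 0 \ T (c * ε) = (c • (T 0 \ T ε) : Set (EuclideanSpace ℝ (Fin N))) := by
    ext x
    constructor
    · intro hx
      have hnx : ‖x‖ ^ 2 ≤ 2 * (c * ε) ^ 2 := hbound (c * ε) (by positivity) x hx
      rw [hT 0, hT (c * ε)] at hx
      obtain ⟨⟨hx1, hx2⟩, hx3⟩ := hx
      simp only [Set.mem_setOf_eq, not_and, not_lt] at hx3
      have hx3' : x i0 ≤ g (c * ε) (bb x) := by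
        by_contra h
        exact absurd hx2 (not_lt.mpr (hx3 (lt_of_not_ge h)))
      refine Set.mem_smul_set.mpr ⟨c⁻¹ • x, ?_, smul_inv_smul₀ (ne_of_gt hc0) x⟩
      set y := c⁻¹ • x with hy
      have hyb : bb y = c⁻¹ * bb x := hbbsmul c⁻¹ (by positivity) x
      have hyc : y i0 = c⁻¹ * x i0 := hsmul_apply c⁻¹ x
      have hxb : bb x = c * bb y := by rw [hyb]; field_simp
      have hxc : x i0 = c * y i0 := by rw [hyc]; field_simp
      have hyn : ‖y‖ = c⁻¹ * ‖x‖ := by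
        rw [hy, norm_smul, Real.norm_eq_abs, abs_of_pos (by positivity)]
      rw [hT 0]
      constructor
      · constructor
        · -- g 0 (bb y) < y i0
          have h1 : g 0 (bb x) = c * g 0 (bb y) := by
            have := hgscale c 0 (bb y) hc0
            rw [mul_zero] at this
            rw [hxb, this]
          rw [h1, hxc] at hx1
          exact lt_of_mul_lt_mul_left hx1 hc0.le
        · -- ‖y‖ < 1
          rw [hyn]
          have h2 : ‖x‖ ^ 2 ≤ 2 * (c * ε) ^ 2 := hnx
          have h3 : (c⁻¹ * ‖x‖) ^ 2 ≤ 2 * ε ^ 2 := by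
            have hcne : c ≠ 0 := ne_of_gt hc0
            have : (c⁻¹ * ‖x‖) ^ 2 = c⁻¹ ^ 2 * ‖x‖ ^ 2 := by ring
            rw [this]
            calc c⁻¹ ^ 2 * ‖x‖ ^ 2 ≤ c⁻¹ ^ 2 * (2 * (c * ε) ^ 2) := by
                  apply mul_le_mul_of_nonneg_left h2 (by positivity)
              _ = 2 * ε ^ 2 := by field_simp
          nlinarith [norm_nonneg x, inv_pos.mpr hc0, mul_nonneg (le_of_lt (inv_pos.mpr hc0)) (norm_nonneg x)]
      · -- y ∉ T ε
        rw [hT ε]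
        simp only [Set.mem_setOf_eq, not_and, not_lt]
        intro h
        exfalso
        have h1 : g (c * ε) (bb x) = c * g ε (bb y) := by
          rw [hxb]; exact hgscale c ε (bb y) hc0
        rw [h1, hxc] at hx3'
        have := lt_of_mul_lt_mul_left (a := c) (by nlinarith) hc0.le
        linarith
    · intro hx
      obtain ⟨y, hy, rfl⟩ := Set.mem_smul_set.mp hx
      have hny : ‖y‖ ^ 2 ≤ 2 * ε ^ 2 := hbound ε hε y hy
      rw [hT 0, hT ε] at hy
      obtain ⟨⟨hy1, hy2⟩, hy3⟩ := hy
      simp only [Set.mem_setOf_eq, not_and, not_lt] at hy3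
      have hy3' : y i0 ≤ g ε (bb y) := by
        by_contra h
        exact absurd hy2 (not_lt.mpr (hy3 (lt_of_not_ge h)))
      have hxb : bb (c • y) = c * bb y := hbbsmul c hc0.le y
      have hxc : (c • y) i0 = c * y i0 := hsmul_apply c y
      have hxn : ‖c • y‖ = c * ‖y‖ := by
        rw [norm_smul, Real.norm_eq_abs, abs_of_pos hc0]
      constructor
      · rw [hT 0]
        constructor
        · have h1 : g 0 (bb (c • y)) = c * g 0 (bb y) := by
            have := hgscale c 0 (bb y) hc0
            rw [mul_zero] at this
            rw [hxb, this]
          show g 0 (bb (c • y)) < (c • y) i0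
          rw [h1, hxc]
          exact mul_lt_mul_of_pos_left hy1 hc0
        · -- ‖c • y‖ < 1
          rw [hxn]
          have : ‖y‖ < 1 := hy2
          nlinarith [norm_nonneg y]
      · rw [hT (c * ε)]
        simp only [Set.mem_setOf_eq, not_and, not_lt]
        intro h
        exfalso
        have h1 : g (c * ε) (bb (c • y)) = c * g ε (bb y) := by
          rw [hxb]; exact hgscale c ε (bb y) hc0
        have h' : g (c * ε) (bb (c • y)) < (c • y) i0 := h
        rw [h1, hxc] at h'
        have := lt_of_mul_lt_mul_left h' hc0.le
        linarith
  rw [hkey, Measure.addHaar_smul_of_nonneg volume hc0.le, finrank_euclideanSpace_fin]
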